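/- arXiv:2102.02870 — 3 statements merged into one kernel-verified Lean document; each statement's English description precedes it below -/
import Mathlib

section
/- Let Y, f, f̂, M, M̂ be real numbers and h > 0 with M² ≥ h and M̂² ≥ h. Set q = (Y − f)²/M² + log(M²) and q̂ = (Y − f̂)²/M̂² + log(M̂²). Then |q̂ − q| ≤ (2/h^{3/2})·(Y − f̂)²·|M̂ − M| + (1/h)·|f̂ − f|·|f̂ + f − 2Y| + (2/h^{1/2})·|M̂ − M|. -/
/-- Log difference bound: for `s ≤ |a|`, `s ≤ |b|`, `0 < s`,
`|log (a^2) - log (b^2)| ≤ 2 |a - b| / s`. -/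
lemma log_sq_diff_bound (a b s : ℝ) (hs : 0 < s) (ha : s ≤ |a|) (hb : s ≤ |b|) :
    |Real.log (a ^ 2) - Real.log (b ^ 2)| ≤ 2 * |a - b| / s := by
  have ha0 : 0 < |a| := lt_of_lt_of_le hs ha
  have hb0 : 0 < |b| := lt_of_lt_of_le hs hb
  have hla : Real.log (a ^ 2) = 2 * Real.log |a| := by
    rw [← sq_abs, sq, Real.log_mul (ne_of_gt ha0) (ne_of_gt ha0)]; ring
  have hlb : Real.log (b ^ 2) = 2 * Real.log |b| := by
    rw [← sq_abs, sq, Real.log_mul (ne_of_gt hb0) (ne_of_gt hb0)]; ring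
  set la := Real.log |a| with hladef
  set lb := Real.log |b| with hlbdef
  rw [hla, hlb, ← mul_sub, abs_mul, abs_two]
  have habs : abs (|a| - |b|) ≤ |a - b| := abs_abs_sub_abs_le_abs_sub a b
  have key : |la - lb| ≤ |a - b| / s := by
    rw [abs_le]
    constructor
    · have h1 : Real.log (|b| / |a|) ≤ |b| / |a| - 1 :=
        Real.log_le_sub_one_of_pos (div_pos hb0 ha0)
      rw [Real.log_div (ne_of_gt hb0) (ne_of_gt ha0)] at h1
      have h3 : (|b| - |a|) / |a| ≤ |a - b| / s := by
        rw [div_le_div_iff₀ ha0 hs]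
        have hd : |b| - |a| ≤ |a - b| := by
          have := abs_le.mp habs; linarith [this.1]
        nlinarith [abs_nonneg (a - b)]
      have h2 : |b| / |a| - 1 = (|b| - |a|) / |a| := by field_simp
      rw [hladef, hlbdef]; linarith
    · have h1 : Real.log (|a| / |b|) ≤ |a| / |b| - 1 :=
        Real.log_le_sub_one_of_pos (div_pos ha0 hb0)
      rw [Real.log_div (ne_of_gt ha0) (ne_of_gt hb0)] at h1
      have h3 : (|a| - |b|) / |b| ≤ |a - b| / s := by
        rw [div_le_div_iff₀ hb0 hs]
        have hd : |a| - |b| ≤ |a - b| := le_trans (le_abs_self _) habs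
        nlinarith [abs_nonneg (a - b)]
      have h2 : |a| / |b| - 1 = (|a| - |b|) / |b| := by field_simp
      rw [hladef, hlbdef]; linarith
  calc 2 * |la - lb| ≤ 2 * (|a - b| / s) := by linarith
    _ = 2 * |a - b| / s := by ring

/-- Deterministic bound on the change in the Gaussian quasi-likelihood contrast
`q = (Y − f)²/M² + log(M²)` when `(f, M)` is replaced by `(f̂, M̂)`. -/
theorem stmt_0 (Y f fhat M Mhat h : ℝ) (hh : 0 < h)
    (hM : h ≤ M ^ 2) (hMhat : h ≤ Mhat ^ 2) :
    |((Y - fhat) ^ 2 / Mhat ^ 2 + Real.log (Mhat ^ 2))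
        - ((Y - f) ^ 2 / M ^ 2 + Real.log (M ^ 2))|
      ≤ (2 / h ^ ((3 : ℝ) / 2)) * (Y - fhat) ^ 2 * |Mhat - M|
        + (1 / h) * |fhat - f| * |fhat + f - 2 * Y|
        + (2 / h ^ ((1 : ℝ) / 2)) * |Mhat - M| := by
  set s := Real.sqrt h with hsdef
  have hs : 0 < s := Real.sqrt_pos.mpr hh
  have hM2 : (0:ℝ) < M ^ 2 := lt_of_lt_of_le hh hM
  have hMh2 : (0:ℝ) < Mhat ^ 2 := lt_of_lt_of_le hh hMhat
  have hsM : s ≤ |M| := by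
    rw [← Real.sqrt_sq_eq_abs]; exact Real.sqrt_le_sqrt hM
  have hsMh : s ≤ |Mhat| := by
    rw [← Real.sqrt_sq_eq_abs]; exact Real.sqrt_le_sqrt hMhat
  have h12 : h ^ ((1 : ℝ) / 2) = s := (Real.sqrt_eq_rpow h).symm
  have h32 : h ^ ((3 : ℝ) / 2) = h * s := by
    rw [show (3 : ℝ) / 2 = 1 + 1/2 by norm_num, Real.rpow_add hh, Real.rpow_one, h12]
  rw [h12, h32]
  have key : ((Y - fhat) ^ 2 / Mhat ^ 2 + Real.log (Mhat ^ 2))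
      - ((Y - f) ^ 2 / M ^ 2 + Real.log (M ^ 2))
      = (Y - fhat) ^ 2 * (1 / Mhat ^ 2 - 1 / M ^ 2)
        + ((Y - fhat) ^ 2 - (Y - f) ^ 2) / M ^ 2
        + (Real.log (Mhat ^ 2) - Real.log (M ^ 2)) := by
    ring
  rw [key]
  have hA : |(Y - fhat) ^ 2 * (1 / Mhat ^ 2 - 1 / M ^ 2)|
      ≤ (2 / (h * s)) * (Y - fhat) ^ 2 * |Mhat - M| := by
    rw [abs_mul, abs_of_nonneg (sq_nonneg (Y - fhat))]
    have hfrac : |1 / Mhat ^ 2 - 1 / M ^ 2| ≤ 2 / (h * s) * |Mhat - M| := by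
      have heq : 1 / Mhat ^ 2 - 1 / M ^ 2 = (M - Mhat) * (M + Mhat) / (Mhat ^ 2 * M ^ 2) := by
        rw [div_sub_div _ _ hMh2.ne' hM2.ne']; ring
      rw [heq, abs_div, abs_mul]
      rw [div_le_iff₀ (by positivity : (0:ℝ) < |Mhat ^ 2 * M ^ 2|)]
      rw [abs_of_pos (by positivity : (0:ℝ) < Mhat ^ 2 * M ^ 2)]
      have h1 : |M + Mhat| ≤ |M| + |Mhat| := abs_add_le _ _
      have h2 : |M - Mhat| = |Mhat - M| := abs_sub_comm _ _
      rw [h2]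
      have hhs : 0 < h * s := mul_pos hh hs
      have hMM : |M| * |M| = M ^ 2 := by rw [← abs_mul, abs_mul_self]; ring
      have hMMh : |Mhat| * |Mhat| = Mhat ^ 2 := by rw [← abs_mul, abs_mul_self]; ring
      have e1 : |M| * (h * s) ≤ Mhat ^ 2 * M ^ 2 := by
        have hmul : h * s ≤ Mhat ^ 2 * |M| :=
          mul_le_mul hMhat hsM hs.le (sq_nonneg Mhat)
        calc |M| * (h * s) ≤ |M| * (Mhat ^ 2 * |M|) :=
              mul_le_mul_of_nonneg_left hmul (abs_nonneg M)
          _ = Mhat ^ 2 * M ^ 2 := by rw [← hMM]; ring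
      have e2 : |Mhat| * (h * s) ≤ Mhat ^ 2 * M ^ 2 := by
        have hmul : h * s ≤ M ^ 2 * |Mhat| :=
          mul_le_mul hM hsMh hs.le (sq_nonneg M)
        calc |Mhat| * (h * s) ≤ |Mhat| * (M ^ 2 * |Mhat|) :=
              mul_le_mul_of_nonneg_left hmul (abs_nonneg Mhat)
          _ = Mhat ^ 2 * M ^ 2 := by rw [← hMMh]; ring
      have hbig : (|M| + |Mhat|) * (h * s) ≤ 2 * (Mhat ^ 2 * M ^ 2) := by
        have := e1; have := e2; nlinarith
      calc |Mhat - M| * |M + Mhat|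
          ≤ |Mhat - M| * (|M| + |Mhat|) :=
            mul_le_mul_of_nonneg_left h1 (abs_nonneg (Mhat - M))
        _ ≤ |Mhat - M| * (2 * (Mhat ^ 2 * M ^ 2) / (h * s)) := by
            apply mul_le_mul_of_nonneg_left _ (abs_nonneg _)
            rw [le_div_iff₀ hhs]; linarith
        _ = 2 / (h * s) * |Mhat - M| * (Mhat ^ 2 * M ^ 2) := by
            field_simp
    calc (Y - fhat) ^ 2 * |1 / Mhat ^ 2 - 1 / M ^ 2|
        ≤ (Y - fhat) ^ 2 * (2 / (h * s) * |Mhat - M|) :=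
          mul_le_mul_of_nonneg_left hfrac (sq_nonneg _)
      _ = 2 / (h * s) * (Y - fhat) ^ 2 * |Mhat - M| := by ring
  have hB : |((Y - fhat) ^ 2 - (Y - f) ^ 2) / M ^ 2|
      ≤ (1 / h) * |fhat - f| * |fhat + f - 2 * Y| := by
    rw [abs_div, abs_of_pos hM2]
    have hnum : |(Y - fhat) ^ 2 - (Y - f) ^ 2| = |fhat - f| * |fhat + f - 2 * Y| := by
      rw [← abs_mul]; congr 1; ring
    rw [hnum, div_le_iff₀ hM2]
    have hstep : (1 / h) * |fhat - f| * |fhat + f - 2 * Y| * h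
        ≤ (1 / h) * |fhat - f| * |fhat + f - 2 * Y| * M ^ 2 := by
      apply mul_le_mul_of_nonneg_left hM
      positivity
    calc |fhat - f| * |fhat + f - 2 * Y|
        = (1 / h) * |fhat - f| * |fhat + f - 2 * Y| * h := by field_simp
      _ ≤ (1 / h) * |fhat - f| * |fhat + f - 2 * Y| * M ^ 2 := hstep
  have hC : |Real.log (Mhat ^ 2) - Real.log (M ^ 2)| ≤ 2 / s * |Mhat - M| := by
    have hlog := log_sq_diff_bound Mhat M s hs hsMh hsM
    calc |Real.log (Mhat ^ 2) - Real.log (M ^ 2)| ≤ 2 * |Mhat - M| / s := hlog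
      _ = 2 / s * |Mhat - M| := by ring
  calc |(Y - fhat) ^ 2 * (1 / Mhat ^ 2 - 1 / M ^ 2)
        + ((Y - fhat) ^ 2 - (Y - f) ^ 2) / M ^ 2
        + (Real.log (Mhat ^ 2) - Real.log (M ^ 2))|
      ≤ |(Y - fhat) ^ 2 * (1 / Mhat ^ 2 - 1 / M ^ 2)
          + ((Y - fhat) ^ 2 - (Y - f) ^ 2) / M ^ 2|
        + |Real.log (Mhat ^ 2) - Real.log (M ^ 2)| := abs_add_le _ _
    _ ≤ |(Y - fhat) ^ 2 * (1 / Mhat ^ 2 - 1 / M ^ 2)|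
        + |((Y - fhat) ^ 2 - (Y - f) ^ 2) / M ^ 2|
        + |Real.log (Mhat ^ 2) - Real.log (M ^ 2)| := by
          linarith [abs_add_le ((Y - fhat) ^ 2 * (1 / Mhat ^ 2 - 1 / M ^ 2))
            (((Y - fhat) ^ 2 - (Y - f) ^ 2) / M ^ 2)]
    _ ≤ (2 / (h * s)) * (Y - fhat) ^ 2 * |Mhat - M|
        + (1 / h) * |fhat - f| * |fhat + f - 2 * Y|
        + 2 / s * |Mhat - M| := by linarith
end

section
/- Let (Ω, 𝓕, P) be a probability space, d ≥ 1, and let v, w : Ω → ℝ^d be random vectors and H : Ω → ℝ a random variable with H ≥ h a.s. for some h > 0. Assume E[H⁻¹‖v‖²] < ∞ and E[H⁻²‖w‖²] < ∞, and define the d × d matrix M by M_{ij} = E[ 2·H⁻¹·v_i·v_j + H⁻²·w_i·w_j ]. If for every nonzero c ∈ ℝ^d it is not the case that both c ⬝ v = 0 almost surely and c ⬝ w = 0 almost surely, then M is positive definite. -/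
open MeasureTheory Matrix

/-- Positive definiteness of the matrix `F = E[2 H⁻¹ v vᵀ + H⁻² w wᵀ]` under the
non-degeneracy assumption that no nonzero `c` satisfies both `c ⬝ v = 0` a.s. and
`c ⬝ w = 0` a.s. -/
theorem stmt_11 {Ω : Type*} {m0 : MeasurableSpace Ω} (μ : Measure Ω) [IsProbabilityMeasure μ]
    (d : ℕ) (hd : 1 ≤ d) (v w : Ω → Fin d → ℝ) (H : Ω → ℝ) (h : ℝ) (hh : 0 < h)
    (hHmeas : Measurable H) (hvmeas : Measurable v) (hwmeas : Measurable w)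
    (hHge : ∀ᵐ ω ∂μ, h ≤ H ω)
    (hint1 : Integrable (fun ω => (H ω)⁻¹ * ∑ i, (v ω i) ^ 2) μ)
    (hint2 : Integrable (fun ω => ((H ω) ^ 2)⁻¹ * ∑ i, (w ω i) ^ 2) μ)
    (M : Matrix (Fin d) (Fin d) ℝ)
    (hM : ∀ i j, M i j
      = ∫ ω, (2 * (H ω)⁻¹ * v ω i * v ω j + ((H ω) ^ 2)⁻¹ * w ω i * w ω j) ∂μ)
    (hnondeg : ∀ c : Fin d → ℝ, c ≠ 0 →
      ¬((fun ω => c ⬝ᵥ v ω) =ᵐ[μ] 0 ∧ (fun ω => c ⬝ᵥ w ω) =ᵐ[μ] 0)) :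
    M.PosDef := by
  have hv : ∀ i, Measurable fun ω => v ω i := fun i => (measurable_pi_apply i).comp hvmeas
  have hw : ∀ i, Measurable fun ω => w ω i := fun i => (measurable_pi_apply i).comp hwmeas
  have hHpos : ∀ᵐ ω ∂μ, 0 < H ω := hHge.mono fun ω hω => lt_of_lt_of_le hh hω
  have hb : ∀ (x : Fin d → ℝ) (i j : Fin d), |x i * x j| ≤ ∑ k, (x k) ^ 2 := by
    intro x i j
    have h1 : (x i) ^ 2 ≤ ∑ k, (x k) ^ 2 :=
      Finset.single_le_sum (fun k _ => sq_nonneg (x k)) (Finset.mem_univ i)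
    have h2 : (x j) ^ 2 ≤ ∑ k, (x k) ^ 2 :=
      Finset.single_le_sum (fun k _ => sq_nonneg (x k)) (Finset.mem_univ j)
    rw [abs_le]
    constructor <;> nlinarith [sq_nonneg (x i + x j), sq_nonneg (x i - x j)]
  have hf1 : ∀ i j, Integrable (fun ω => (H ω)⁻¹ * (v ω i * v ω j)) μ := by
    intro i j
    refine hint1.mono' (((hHmeas.inv).mul ((hv i).mul (hv j))).aestronglyMeasurable) ?_
    filter_upwards [hHpos] with ω hω
    have h0 : 0 ≤ (H ω)⁻¹ := inv_nonneg.mpr hω.le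
    rw [Real.norm_eq_abs, abs_mul, abs_of_nonneg h0]
    exact mul_le_mul_of_nonneg_left (hb (v ω) i j) h0
  have hf2 : ∀ i j, Integrable (fun ω => ((H ω) ^ 2)⁻¹ * (w ω i * w ω j)) μ := by
    intro i j
    refine hint2.mono' ((((hHmeas.pow_const 2).inv).mul ((hw i).mul (hw j))).aestronglyMeasurable) ?_
    filter_upwards [hHpos] with ω hω
    have h0 : 0 ≤ ((H ω) ^ 2)⁻¹ := inv_nonneg.mpr (sq_nonneg _)
    rw [Real.norm_eq_abs, abs_mul, abs_of_nonneg h0]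
    exact mul_le_mul_of_nonneg_left (hb (w ω) i j) h0
  have hA : ∀ i j, Integrable
      (fun ω => 2 * (H ω)⁻¹ * v ω i * v ω j + ((H ω) ^ 2)⁻¹ * w ω i * w ω j) μ := by
    intro i j
    have := ((hf1 i j).const_mul 2).add (hf2 i j)
    exact this.congr (Filter.Eventually.of_forall fun ω => by
      simp only [Pi.add_apply]; ring)
  have hsym : M.IsHermitian := by
    ext i j
    simp only [Matrix.conjTranspose_apply, star_trivial]
    rw [hM, hM]
    exact integral_congr_ae (Filter.Eventually.of_forall fun ω => by ring)
  refine Matrix.PosDef.of_dotProduct_mulVec_pos hsym fun x hx => ?_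
  set G : Ω → ℝ := fun ω => 2 * (H ω)⁻¹ * (x ⬝ᵥ v ω) ^ 2 + ((H ω) ^ 2)⁻¹ * (x ⬝ᵥ w ω) ^ 2
    with hG
  set g : Fin d → Fin d → Ω → ℝ := fun i j ω => x i * x j *
      (2 * (H ω)⁻¹ * v ω i * v ω j + ((H ω) ^ 2)⁻¹ * w ω i * w ω j) with hg
  have hgint : ∀ i j, Integrable (g i j) μ := fun i j => (hA i j).const_mul (x i * x j)
  have hpt : ∀ ω, (∑ i, ∑ j, g i j ω) = G ω := by
    intro ω
    have e1 : (∑ i, x i * v ω i) * (∑ j, x j * v ω j)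
        = ∑ i, ∑ j, (x i * v ω i) * (x j * v ω j) := Finset.sum_mul_sum _ _ _ _
    have e2 : (∑ i, x i * w ω i) * (∑ j, x j * w ω j)
        = ∑ i, ∑ j, (x i * w ω i) * (x j * w ω j) := Finset.sum_mul_sum _ _ _ _
    simp only [hG, hg, dotProduct, sq]
    rw [e1, e2, Finset.mul_sum, Finset.mul_sum, ← Finset.sum_add_distrib]
    refine Finset.sum_congr rfl fun i _ => ?_
    rw [Finset.mul_sum, Finset.mul_sum, ← Finset.sum_add_distrib]
    exact Finset.sum_congr rfl fun j _ => by ring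
  have hGint : Integrable G μ := by
    have : Integrable (fun ω => ∑ i, ∑ j, g i j ω) μ :=
      integrable_finset_sum _ fun i _ => integrable_finset_sum _ fun j _ => hgint i j
    exact this.congr (Filter.Eventually.of_forall hpt)
  have step : ∫ ω, ∑ i, ∑ j, g i j ω ∂μ = ∑ i, ∑ j, ∫ ω, g i j ω ∂μ := by
    rw [integral_finset_sum _ (fun i _ => integrable_finset_sum _ fun j _ => hgint i j)]
    exact Finset.sum_congr rfl fun i _ => integral_finset_sum _ fun j _ => hgint i j
  have hquad : star x ⬝ᵥ M *ᵥ x = ∫ ω, G ω ∂μ := by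
    have h1 : star x ⬝ᵥ M *ᵥ x = ∑ i, ∑ j, x i * x j * M i j := by
      simp only [dotProduct, Matrix.mulVec, star_trivial, Finset.mul_sum]
      exact Finset.sum_congr rfl fun i _ => Finset.sum_congr rfl fun j _ => by ring
    have h2 : ∀ i j, x i * x j * M i j = ∫ ω, g i j ω ∂μ := by
      intro i j
      rw [hM, hg]
      exact (integral_const_mul _ _).symm
    rw [h1]
    simp_rw [h2]
    rw [← step]
    exact integral_congr_ae (Filter.Eventually.of_forall hpt)
  rw [hquad]
  have hGnn : 0 ≤ᵐ[μ] G := by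
    filter_upwards [hHpos] with ω hω
    have h1 : 0 ≤ (H ω)⁻¹ := inv_nonneg.mpr hω.le
    have h2 : 0 ≤ ((H ω) ^ 2)⁻¹ := inv_nonneg.mpr (sq_nonneg _)
    simp only [hG, Pi.zero_apply]
    positivity
  rcases lt_or_eq_of_le (integral_nonneg_of_ae hGnn) with hpos | hzero
  · exact hpos
  · exfalso
    have hGz : G =ᵐ[μ] 0 :=
      (integral_eq_zero_iff_of_nonneg_ae hGnn hGint).mp hzero.symm
    refine hnondeg x hx ⟨?_, ?_⟩
    · filter_upwards [hGz, hHpos] with ω hω hH0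
      have h1 : 0 < (H ω)⁻¹ := inv_pos.mpr hH0
      have h2 : 0 ≤ ((H ω) ^ 2)⁻¹ := inv_nonneg.mpr (sq_nonneg _)
      simp only [hG, Pi.zero_apply] at hω ⊢
      have hs : (x ⬝ᵥ v ω) ^ 2 = 0 := by
        refine le_antisymm ?_ (sq_nonneg _)
        nlinarith [mul_nonneg h2 (sq_nonneg (x ⬝ᵥ w ω)), sq_nonneg (x ⬝ᵥ v ω)]
      exact sq_eq_zero_iff.mp hs
    · filter_upwards [hGz, hHpos] with ω hω hH0
      have h1 : 0 ≤ (H ω)⁻¹ := inv_nonneg.mpr hH0.le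
      have h2 : 0 < ((H ω) ^ 2)⁻¹ := inv_pos.mpr (pow_pos hH0 2)
      simp only [hG, Pi.zero_apply] at hω ⊢
      have hs : (x ⬝ᵥ w ω) ^ 2 = 0 := by
        refine le_antisymm ?_ (sq_nonneg _)
        nlinarith [mul_nonneg h1 (sq_nonneg (x ⬝ᵥ v ω)), sq_nonneg (x ⬝ᵥ w ω)]
      exact sq_eq_zero_iff.mp hs
end

section
/- Let r ≥ 1, d_x ≥ 1, and let f, M : ℝ^ℕ × (ℝ^{d_x})^ℕ → ℝ be functions such that for Ψ ∈ {f, M} there are summable nonnegative sequences (a_k^Ψ), (b_k^Ψ) with |Ψ(y, x) − Ψ(y', x')| ≤ Σ_k a_k^Ψ·|y_k − y'_k| + Σ_k b_k^Ψ·‖x_k − x'_k‖ for all (y, x), (y', x'). Let ξ₀ be a real random variable with ‖ξ₀‖_r = (E|ξ₀|^r)^{1/r} < ∞, let η₀ be a random variable on a measurable space E, and let g : (ℝ^{d_x})^ℕ × E → ℝ^{d_x} be measurable with ‖g(x; η₀) − g(x'; η₀)‖_{L^r} ≤ Σ_k α_k(g)·‖x_k − x'_k‖ for a nonnegative sequence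 (α_k(g)). For w > 0 define the norm ‖(u, v)‖_w = |u| + w·‖v‖ on ℝ × ℝ^{d_x}, and define F(z; ξ₀, η₀) = ( M(y, x)·ξ₀ + f(y, x), g(x; η₀) ) for z = ((y_k, x_k))_k. Then for all z = ((y_k, x_k))_k and z̃ = ((ỹ_k, x̃_k))_k, ‖ ‖F(z; ξ₀, η₀) − F(z̃; ξ₀, η₀)‖_w ‖_{L^r} ≤ Σ_{k≥1} α_k·‖(y_k − ỹ_k, x_k − x̃_k)‖_w, where α_k = max{ a_k^f + ‖ξ₀‖_r·a_k^M, (1/w)·(b_k^f + ‖ξ₀‖_r·b_k^M) + α_k(g) }. -/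
open MeasureTheory

lemma aux_lp_add {Ω : Type*} [MeasurableSpace Ω] (μ : Measure Ω) {U V : Ω → ENNReal}
    (hU : Measurable U) {p : ℝ} (hp : 1 ≤ p) :
    (∫⁻ ω, (U ω + V ω) ^ p ∂μ) ^ (1/p)
      ≤ (∫⁻ ω, U ω ^ p ∂μ) ^ (1/p) + (∫⁻ ω, V ω ^ p ∂μ) ^ (1/p) := by
  have hp0 : 0 < p := lt_of_lt_of_le one_pos hp
  obtain ⟨m, hm, hmle, heq⟩ := exists_measurable_le_lintegral_eq μ (fun ω => (U ω + V ω) ^ p)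
  set V' : Ω → ENNReal := fun ω => m ω ^ (1/p) - U ω with hV'
  have hV'm : Measurable V' := (hm.pow_const _).sub hU
  have hroot : ∀ ω, m ω ^ (1/p) ≤ U ω + V ω := by
    intro ω
    calc m ω ^ (1/p) ≤ ((U ω + V ω) ^ p) ^ (1/p) :=
          ENNReal.rpow_le_rpow (hmle ω) (by positivity)
      _ = U ω + V ω := by
          rw [← ENNReal.rpow_mul, mul_one_div_cancel hp0.ne', ENNReal.rpow_one]
  have hV'le : ∀ ω, V' ω ≤ V ω := fun ω => tsub_le_iff_left.mpr (hroot ω)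
  have hmle' : ∀ ω, m ω ≤ (U ω + V' ω) ^ p := by
    intro ω
    have h1 : m ω ^ (1/p) ≤ U ω + V' ω := le_add_tsub
    calc m ω = (m ω ^ (1/p)) ^ p := by
          rw [← ENNReal.rpow_mul, one_div_mul_cancel hp0.ne', ENNReal.rpow_one]
      _ ≤ (U ω + V' ω) ^ p := ENNReal.rpow_le_rpow h1 hp0.le
  calc (∫⁻ ω, (U ω + V ω) ^ p ∂μ) ^ (1/p) = (∫⁻ ω, m ω ∂μ) ^ (1/p) := by rw [heq]
    _ ≤ (∫⁻ ω, (U ω + V' ω) ^ p ∂μ) ^ (1/p) :=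
        ENNReal.rpow_le_rpow (lintegral_mono hmle') (by positivity)
    _ ≤ (∫⁻ ω, U ω ^ p ∂μ) ^ (1/p) + (∫⁻ ω, V' ω ^ p ∂μ) ^ (1/p) :=
        ENNReal.lintegral_Lp_add_le hU.aemeasurable hV'm.aemeasurable hp
    _ ≤ (∫⁻ ω, U ω ^ p ∂μ) ^ (1/p) + (∫⁻ ω, V ω ^ p ∂μ) ^ (1/p) := by
        gcongr with ω
        exact hV'le ω

lemma aux_eLpNorm_add {Ω : Type*} [MeasurableSpace Ω] (μ : Measure Ω) {u v : Ω → ℝ}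
    (hu : Measurable u) (hu0 : ∀ ω, 0 ≤ u ω) (hv0 : ∀ ω, 0 ≤ v ω) {p : ℝ} (hp : 1 ≤ p) :
    eLpNorm (fun ω => u ω + v ω) (ENNReal.ofReal p) μ
      ≤ eLpNorm u (ENNReal.ofReal p) μ + eLpNorm v (ENNReal.ofReal p) μ := by
  have hp0 : (0:ℝ) < p := lt_of_lt_of_le one_pos hp
  have hP0 : ENNReal.ofReal p ≠ 0 := by simp [ENNReal.ofReal_eq_zero, not_le, hp0]
  have hPt : ENNReal.ofReal p ≠ ⊤ := ENNReal.ofReal_ne_top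
  have htR : (ENNReal.ofReal p).toReal = p := ENNReal.toReal_ofReal hp0.le
  rw [eLpNorm_eq_lintegral_rpow_enorm_toReal hP0 hPt, eLpNorm_eq_lintegral_rpow_enorm_toReal hP0 hPt,
    eLpNorm_eq_lintegral_rpow_enorm_toReal hP0 hPt, htR]
  have h1 : ∀ ω, ((‖u ω + v ω‖ₑ : ENNReal)) = ENNReal.ofReal (u ω) + ENNReal.ofReal (v ω) := by
    intro ω
    rw [Real.enorm_eq_ofReal (add_nonneg (hu0 ω) (hv0 ω)), ENNReal.ofReal_add (hu0 ω) (hv0 ω)]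
  have h2 : ∀ ω, ((‖u ω‖ₑ : ENNReal)) = ENNReal.ofReal (u ω) := fun ω =>
    Real.enorm_eq_ofReal (hu0 ω)
  have h3 : ∀ ω, ((‖v ω‖ₑ : ENNReal)) = ENNReal.ofReal (v ω) := fun ω =>
    Real.enorm_eq_ofReal (hv0 ω)
  simp only [h1, h2, h3]
  exact aux_lp_add μ (ENNReal.measurable_ofReal.comp hu) hp


/-- L^r contraction estimate, in the weighted norm `‖(u,v)‖_w = |u| + w‖v‖`, for the map
`F(z; ξ₀, η₀) = (M(y,x)ξ₀ + f(y,x), g(x; η₀))` driving the joint process `Z_t = (Y_t, X_t)`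
of the affine causal model with exogenous covariates. The joint Lipschitz coefficients are
`α_k = max{a_k^f + ‖ξ₀‖_r a_k^M, (1/w)(b_k^f + ‖ξ₀‖_r b_k^M) + α_k(g)}`.
Sums and L^r norms are taken in `[0,∞]`. -/
theorem stmt_14 {Ω : Type*} {m0 : MeasurableSpace Ω} (μ : Measure Ω) [IsProbabilityMeasure μ]
    {E : Type*} [MeasurableSpace E]
    (r : ℝ) (hr : 1 ≤ r) (dx : ℕ) (hdx : 1 ≤ dx)
    (f M : (ℕ → ℝ) → (ℕ → EuclideanSpace ℝ (Fin dx)) → ℝ)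
    (af bf aM bM αg : ℕ → ℝ)
    (haf0 : ∀ k, 0 ≤ af k) (hbf0 : ∀ k, 0 ≤ bf k)
    (haM0 : ∀ k, 0 ≤ aM k) (hbM0 : ∀ k, 0 ≤ bM k) (hαg0 : ∀ k, 0 ≤ αg k)
    (hafs : Summable af) (hbfs : Summable bf) (haMs : Summable aM) (hbMs : Summable bM)
    (hlipf : ∀ (y y' : ℕ → ℝ) (x x' : ℕ → EuclideanSpace ℝ (Fin dx)),
      ENNReal.ofReal |f y x - f y' x'|
        ≤ ∑' k : ℕ, ENNReal.ofReal (af k * |y k - y' k|)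
          + ∑' k : ℕ, ENNReal.ofReal (bf k * ‖x k - x' k‖))
    (hlipM : ∀ (y y' : ℕ → ℝ) (x x' : ℕ → EuclideanSpace ℝ (Fin dx)),
      ENNReal.ofReal |M y x - M y' x'|
        ≤ ∑' k : ℕ, ENNReal.ofReal (aM k * |y k - y' k|)
          + ∑' k : ℕ, ENNReal.ofReal (bM k * ‖x k - x' k‖))
    (ξ : Ω → ℝ) (η : Ω → E) (hξ : Measurable ξ) (hη : Measurable η)
    (hξr : eLpNorm ξ (ENNReal.ofReal r) μ < ⊤)
    (g : (ℕ → EuclideanSpace ℝ (Fin dx)) → E → EuclideanSpace ℝ (Fin dx))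
    (hlipg : ∀ x x' : ℕ → EuclideanSpace ℝ (Fin dx),
      eLpNorm (fun ω => g x (η ω) - g x' (η ω)) (ENNReal.ofReal r) μ
        ≤ ∑' k : ℕ, ENNReal.ofReal (αg k * ‖x k - x' k‖))
    (w : ℝ) (hw : 0 < w)
    (α : ℕ → ℝ)
    (hα : ∀ k, α k = max
      (af k + (eLpNorm ξ (ENNReal.ofReal r) μ).toReal * aM k)
      ((bf k + (eLpNorm ξ (ENNReal.ofReal r) μ).toReal * bM k) / w + αg k)) :
    ∀ (y yt : ℕ → ℝ) (x xt : ℕ → EuclideanSpace ℝ (Fin dx)),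
      eLpNorm (fun ω =>
          |(M y x * ξ ω + f y x) - (M yt xt * ξ ω + f yt xt)|
            + w * ‖g x (η ω) - g xt (η ω)‖) (ENNReal.ofReal r) μ
        ≤ ∑' k : ℕ, ENNReal.ofReal (α k * (|y k - yt k| + w * ‖x k - xt k‖)) := by
  intro y yt x xt
  have hr0 : (0:ℝ) < r := lt_of_lt_of_le one_pos hr
  set P := ENNReal.ofReal r with hPdef
  have hP1 : 1 ≤ P := ENNReal.one_le_ofReal.mpr hr
  have hP0 : P ≠ 0 := by simp [hPdef, ENNReal.ofReal_eq_zero, not_le, hr0]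
  set K := (eLpNorm ξ P μ).toReal with hKdef
  have hK0 : 0 ≤ K := ENNReal.toReal_nonneg
  have hLK : eLpNorm ξ P μ = ENNReal.ofReal K := (ENNReal.ofReal_toReal hξr.ne).symm
  set ΔM := M y x - M yt xt with hΔM
  set Δf := f y x - f yt xt with hΔf
  set G : Ω → EuclideanSpace ℝ (Fin dx) := fun ω => g x (η ω) - g xt (η ω) with hG
  set u : Ω → ℝ := fun ω => |ΔM| * |ξ ω| + |Δf| with hu
  set v : Ω → ℝ := fun ω => w * ‖G ω‖ with hv
  have hum : Measurable u := (hξ.abs.const_mul _).add_const _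
  have hu0 : ∀ ω, 0 ≤ u ω := fun ω =>
    add_nonneg (mul_nonneg (abs_nonneg _) (abs_nonneg _)) (abs_nonneg _)
  have hv0 : ∀ ω, 0 ≤ v ω := fun ω => mul_nonneg hw.le (norm_nonneg _)
  -- step 1
  have step1 : eLpNorm (fun ω =>
      |(M y x * ξ ω + f y x) - (M yt xt * ξ ω + f yt xt)| + w * ‖G ω‖) P μ
      ≤ eLpNorm (fun ω => u ω + v ω) P μ := by
    apply eLpNorm_mono
    intro ω
    have hA : |(M y x * ξ ω + f y x) - (M yt xt * ξ ω + f yt xt)| ≤ u ω := by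
      have he : (M y x * ξ ω + f y x) - (M yt xt * ξ ω + f yt xt) = ΔM * ξ ω + Δf := by
        rw [hΔM, hΔf]; ring
      rw [he]
      calc |ΔM * ξ ω + Δf| ≤ |ΔM * ξ ω| + |Δf| := abs_add_le _ _
        _ = u ω := by rw [abs_mul]
    simp only [Real.norm_eq_abs]
    rw [abs_of_nonneg (add_nonneg (abs_nonneg _) (hv0 ω)),
      abs_of_nonneg (add_nonneg (hu0 ω) (hv0 ω))]
    exact add_le_add_left hA (v ω)
  -- step 2
  have step2 : eLpNorm (fun ω => u ω + v ω) P μ ≤ eLpNorm u P μ + eLpNorm v P μ :=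
    aux_eLpNorm_add μ hum hu0 hv0 hr
  -- step 3 : eLpNorm u
  have h3a : eLpNorm (fun ω => |ΔM| * |ξ ω|) P μ = ENNReal.ofReal |ΔM| * eLpNorm ξ P μ := by
    have he : (fun ω => |ΔM| * |ξ ω|) = (|ΔM| : ℝ) • (fun ω => |ξ ω|) := rfl
    rw [he, eLpNorm_const_smul, ← Real.enorm_eq_ofReal (abs_nonneg ΔM)]
    simp_rw [← Real.norm_eq_abs]
    rw [eLpNorm_norm]
  have h3b : eLpNorm (fun _ : Ω => |Δf|) P μ = ENNReal.ofReal |Δf| := by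
    rw [eLpNorm_const _ hP0 (IsProbabilityMeasure.ne_zero μ), measure_univ, ENNReal.one_rpow,
      mul_one]
    exact Real.enorm_eq_ofReal (abs_nonneg Δf)
  have step3 : eLpNorm u P μ ≤ ENNReal.ofReal |ΔM| * eLpNorm ξ P μ + ENNReal.ofReal |Δf| := by
    rw [← h3a, ← h3b]
    exact eLpNorm_add_le ((hξ.abs.const_mul _).aestronglyMeasurable)
      aestronglyMeasurable_const hP1
  -- step 4 : eLpNorm v
  have step4 : eLpNorm v P μ = ENNReal.ofReal w * eLpNorm G P μ := by
    have he : v = (w : ℝ) • (fun ω => ‖G ω‖) := rfl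
    rw [he, eLpNorm_const_smul, ← Real.enorm_eq_ofReal hw.le, eLpNorm_norm]
  -- combine
  have key : ∀ k : ℕ,
      ENNReal.ofReal K * ENNReal.ofReal (aM k * |y k - yt k|)
        + ENNReal.ofReal (af k * |y k - yt k|)
        + (ENNReal.ofReal K * ENNReal.ofReal (bM k * ‖x k - xt k‖)
          + ENNReal.ofReal (bf k * ‖x k - xt k‖)
          + ENNReal.ofReal w * ENNReal.ofReal (αg k * ‖x k - xt k‖))
      ≤ ENNReal.ofReal (α k * (|y k - yt k| + w * ‖x k - xt k‖)) := by
    intro k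
    set dy := |y k - yt k| with hdy
    set dxn := ‖x k - xt k‖ with hdxn
    have hdy0 : 0 ≤ dy := abs_nonneg _
    have hdxn0 : 0 ≤ dxn := norm_nonneg _
    have hA : af k + K * aM k ≤ α k := by rw [hα k]; exact le_max_left _ _
    have hB : (bf k + K * bM k) / w + αg k ≤ α k := by rw [hα k]; exact le_max_right _ _
    have h1 : K * (aM k * dy) + af k * dy
        + (K * (bM k * dxn) + bf k * dxn + w * (αg k * dxn))
        ≤ α k * (dy + w * dxn) := by
      have hBw : ((bf k + K * bM k) / w + αg k) * w = bf k + K * bM k + αg k * w := by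
        field_simp
      calc K * (aM k * dy) + af k * dy + (K * (bM k * dxn) + bf k * dxn + w * (αg k * dxn))
          = (af k + K * aM k) * dy + (((bf k + K * bM k) / w + αg k) * w) * dxn := by
            rw [hBw]; ring
        _ ≤ α k * dy + (α k * w) * dxn := by
            refine add_le_add (mul_le_mul_of_nonneg_right hA hdy0) ?_
            exact mul_le_mul_of_nonneg_right (mul_le_mul_of_nonneg_right hB hw.le) hdxn0
        _ = α k * (dy + w * dxn) := by ring
    calc ENNReal.ofReal K * ENNReal.ofReal (aM k * dy) + ENNReal.ofReal (af k * dy)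
        + (ENNReal.ofReal K * ENNReal.ofReal (bM k * dxn) + ENNReal.ofReal (bf k * dxn)
          + ENNReal.ofReal w * ENNReal.ofReal (αg k * dxn))
        = ENNReal.ofReal (K * (aM k * dy) + af k * dy
            + (K * (bM k * dxn) + bf k * dxn + w * (αg k * dxn))) := by
          have ht1 : 0 ≤ K * (aM k * dy) := mul_nonneg hK0 (mul_nonneg (haM0 k) hdy0)
          have ht2 : 0 ≤ af k * dy := mul_nonneg (haf0 k) hdy0
          have ht3 : 0 ≤ K * (bM k * dxn) := mul_nonneg hK0 (mul_nonneg (hbM0 k) hdxn0)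
          have ht4 : 0 ≤ bf k * dxn := mul_nonneg (hbf0 k) hdxn0
          have ht5 : 0 ≤ w * (αg k * dxn) := mul_nonneg hw.le (mul_nonneg (hαg0 k) hdxn0)
          rw [← ENNReal.ofReal_mul hK0, ← ENNReal.ofReal_mul hK0, ← ENNReal.ofReal_mul hw.le,
            ← ENNReal.ofReal_add ht1 ht2, ← ENNReal.ofReal_add ht3 ht4,
            ← ENNReal.ofReal_add (add_nonneg ht3 ht4) ht5,
            ← ENNReal.ofReal_add (add_nonneg ht1 ht2) (add_nonneg (add_nonneg ht3 ht4) ht5)]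
      _ ≤ ENNReal.ofReal (α k * (dy + w * dxn)) := ENNReal.ofReal_le_ofReal h1
  calc eLpNorm (fun ω =>
      |(M y x * ξ ω + f y x) - (M yt xt * ξ ω + f yt xt)| + w * ‖G ω‖) P μ
      ≤ eLpNorm u P μ + eLpNorm v P μ := step1.trans step2
    _ ≤ (ENNReal.ofReal |ΔM| * eLpNorm ξ P μ + ENNReal.ofReal |Δf|)
        + ENNReal.ofReal w * eLpNorm G P μ := add_le_add step3 (le_of_eq step4)
    _ ≤ ((∑' k : ℕ, ENNReal.ofReal (aM k * |y k - yt k|)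
          + ∑' k : ℕ, ENNReal.ofReal (bM k * ‖x k - xt k‖)) * ENNReal.ofReal K
        + (∑' k : ℕ, ENNReal.ofReal (af k * |y k - yt k|)
          + ∑' k : ℕ, ENNReal.ofReal (bf k * ‖x k - xt k‖)))
        + ENNReal.ofReal w * (∑' k : ℕ, ENNReal.ofReal (αg k * ‖x k - xt k‖)) := by
        rw [hLK]
        gcongr
        · exact hlipM y yt x xt
        · exact hlipf y yt x xt
        · exact hlipg x xt
    _ = ∑' k : ℕ, (ENNReal.ofReal K * ENNReal.ofReal (aM k * |y k - yt k|)
          + ENNReal.ofReal (af k * |y k - yt k|)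
          + (ENNReal.ofReal K * ENNReal.ofReal (bM k * ‖x k - xt k‖)
            + ENNReal.ofReal (bf k * ‖x k - xt k‖)
            + ENNReal.ofReal w * ENNReal.ofReal (αg k * ‖x k - xt k‖))) := by
        rw [ENNReal.tsum_add, ENNReal.tsum_add, ENNReal.tsum_add, ENNReal.tsum_add,
          ENNReal.tsum_mul_left, ENNReal.tsum_mul_left, ENNReal.tsum_mul_left]
        ring
    _ ≤ ∑' k : ℕ, ENNReal.ofReal (α k * (|y k - yt k| + w * ‖x k - xt k‖)) :=
        ENNReal.tsum_le_tsum key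
end
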